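/- Let q ∈ UCRPQ(a, a*) over a finite alphabet Σ. Then the family {A ⊆ Σ : q is A-bounded} has a greatest element under inclusion; in particular, there is a unique ⊆-maximal set A ⊆ Σ such that q is A-bounded, namely the union of all sets B ⊆ Σ such that q is B-bounded. -/

import Mathlib

namespace Paper

/-! ## Words -/

/-- `wpow w n` is the word `w` repeated `n` times. -/
def wpow {α : Type} (w : List α) (n : ℕ) : List α := (List.replicate n w).flatten

/-! ## Graph databases -/

/-- A graph database over the alphabet `α`: a finite set of vertices together with
labelled edges. -/
structure GDB (α : Type) : Type 1 where
  V : Type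
  finV : Finite V
  edges : Set (V × α × V)

/-! ## Conjunctive queries -/

/-- A (Boolean) conjunctive query over `α`: a finite set of variables and a set of
atoms `x —a→ y` with `a ∈ α`. -/
structure CQ (α : Type) : Type 1 where
  V : Type
  finV : Finite V
  atoms : Set (V × α × V)

variable {α : Type}

/-- `h` is a homomorphism from the CQ `p` to the CQ `p'`. -/
def CQ.Hom (p p' : CQ α) (h : p.V → p'.V) : Prop :=
  ∀ x a y, (x, a, y) ∈ p.atoms → (h x, a, h y) ∈ p'.atoms

/-- There is a homomorphism from the CQ `p` to the CQ `p'`. -/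
def CQ.homTo (p p' : CQ α) : Prop := ∃ h, p.Hom p' h

/-- There is a homomorphism from the CQ `p` to the graph database `G`. -/
def CQ.homToG (p : CQ α) (G : GDB α) : Prop :=
  ∃ h : p.V → G.V, ∀ x a y, (x, a, y) ∈ p.atoms → (h x, a, h y) ∈ G.edges

/-! ## CRPQs -/

/-- A (Boolean) conjunctive regular path query over alphabet `α` with variables `V`:
a finite conjunction of atoms `src i —lang i→ tgt i`. -/
structure CRPQ (α V : Type) where
  k : ℕ
  src : Fin k → V
  lang : Fin k → Set (List α)
  tgt : Fin k → V

variable {V : Type}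

/-! ## Expansions -/

/-- Variables of an expansion before collapsing equality atoms: the original variables
plus, for each atom `i` expanded by the word `w i`, the fresh variables
`z_1, …, z_{|w i| - 1}`. -/
def RawVar (q : CRPQ α V) (w : Fin q.k → List α) : Type :=
  V ⊕ (Σ i : Fin q.k, Fin ((w i).length - 1))

instance {q : CRPQ α V} [Finite V] {w : Fin q.k → List α} : Finite (RawVar q w) := by
  unfold RawVar; infer_instance

/-- The `j`-th variable (`0 ≤ j ≤ |w i|`) on the path expanding atom `i`:
position `0` is the source variable, position `|w i|` the target variable, and the
intermediate positions are fresh variables. -/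
def node (q : CRPQ α V) (w : Fin q.k → List α) (i : Fin q.k) (j : ℕ) : RawVar q w :=
  if j = 0 then Sum.inl (q.src i)
  else if j = (w i).length then Sum.inl (q.tgt i)
  else if h : j - 1 < (w i).length - 1 then Sum.inr ⟨i, ⟨j - 1, h⟩⟩
  else Sum.inl (q.src i)

/-- The equality atoms produced by `ε`-expansions: `src i = tgt i` whenever `w i = ε`.
(The expansion collapses the equivalence they generate.) -/
def eqRel (q : CRPQ α V) (w : Fin q.k → List α) : RawVar q w → RawVar q w → Prop :=
  fun x y => ∃ i, w i = [] ∧ x = Sum.inl (q.src i) ∧ y = Sum.inl (q.tgt i)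

/-- The expansion of the CRPQ `q` obtained by expanding each atom `i` with the word
`w i`: each atom is replaced by its `w i`-expansion, and equality atoms are collapsed. -/
def expansion (q : CRPQ α V) [Finite V] (w : Fin q.k → List α) : CQ α where
  V := Quot (eqRel q w)
  finV := Finite.of_surjective (Quot.mk _) fun x => Quot.exists_rep x
  atoms := { t | ∃ (i : Fin q.k) (j : ℕ) (hj : j < (w i).length),
    t = (Quot.mk _ (node q w i j), (w i).get ⟨j, hj⟩, Quot.mk _ (node q w i (j + 1))) }

/-- `Exp q`: the set of all expansions of the CRPQ `q`. -/
def Exp (q : CRPQ α V) [Finite V] : Set (CQ α) :=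
  { p | ∃ w : Fin q.k → List α, (∀ i, w i ∈ q.lang i) ∧ p = expansion q w }

/-- `Expm q m`: the set of all `m`-expansions of the CRPQ `q`. -/
def Expm (q : CRPQ α V) [Finite V] (m : ℕ) : Set (CQ α) :=
  { p | ∃ w : Fin q.k → List α,
      (∀ i, w i ∈ q.lang i) ∧ (∀ i, (w i).length ≤ m) ∧ p = expansion q w }

/-! ## UCRPQs, satisfaction, containment, boundedness -/

/-- The set of expansions of a UCRPQ (a finite disjunction of CRPQs). -/
def ExpU (Q : List (CRPQ α V)) [Finite V] : Set (CQ α) :=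
  { p | ∃ q ∈ Q, p ∈ Exp q }

/-- The set of `m`-expansions of a UCRPQ. -/
def ExpmU (Q : List (CRPQ α V)) [Finite V] (m : ℕ) : Set (CQ α) :=
  { p | ∃ q ∈ Q, p ∈ Expm q m }

/-- Satisfaction of a (possibly infinite) disjunction of CQs by a graph database. -/
def SatSet (S : Set (CQ α)) (G : GDB α) : Prop := ∃ p ∈ S, p.homToG G

/-- `G ⊨ Q` for a UCRPQ `Q`: some expansion of `Q` maps homomorphically into `G`. -/
def Sat (Q : List (CRPQ α V)) [Finite V] (G : GDB α) : Prop := SatSet (ExpU Q) G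

/-- Containment of queries (viewed as properties of graph databases):
every graph database satisfying the first satisfies the second. -/
def Contained (P P' : GDB α → Prop) : Prop := ∀ G, P G → P' G

/-- Equivalence of queries (viewed as properties of graph databases). -/
def QEquiv (P P' : GDB α → Prop) : Prop := ∀ G, P G ↔ P' G

/-- A query is bounded iff it is equivalent to some UCQ (finite disjunction of CQs). -/
def Bounded (P : GDB α → Prop) : Prop :=
  ∃ Φ : List (CQ α), ∀ G, P G ↔ ∃ p ∈ Φ, p.homToG G


/-! ## The class UCRPQ(SSF, w*) -/

/-- An atom language in the class (SSF, w*): either a succinct star-free expression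
(denoting a finite language), or `w*` for a word `w`. -/
inductive AtomLang (α : Type) : Type where
  | ssf (L : Set (List α)) (h : L.Finite) : AtomLang α
  | star (w : List α) : AtomLang α

variable {α V : Type}

/-- The language denoted by an atom of the class (SSF, w*). -/
def AtomLang.language : AtomLang α → Set (List α)
  | .ssf L _ => L
  | .star w => { u | ∃ n, u = wpow w n }

/-- A CRPQ all of whose atom languages are SSF expressions or expressions `w*`. -/
structure SCRPQ (α V : Type) where
  k : ℕ
  src : Fin k → V
  lang : Fin k → AtomLang α
  tgt : Fin k → V

/-- The underlying CRPQ of an SCRPQ. -/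
def SCRPQ.toCRPQ (q : SCRPQ α V) : CRPQ α V :=
  ⟨q.k, q.src, fun i => (q.lang i).language, q.tgt⟩

/-- The underlying UCRPQ of a UCRPQ in the class (SSF, w*). -/
def toU (Q : List (SCRPQ α V)) : List (CRPQ α V) := Q.map SCRPQ.toCRPQ

/-- Satisfaction for UCRPQs of the class (SSF, w*). -/
def SatS (Q : List (SCRPQ α V)) [Finite V] (G : GDB α) : Prop := Sat (toU Q) G

/-- `AtomLang.cut m`: replace `w*` with `w^{≤m} = {w^n : n ≤ m}`; SSF atoms unchanged. -/
def AtomLang.cut (m : ℕ) : AtomLang α → AtomLang α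
  | .ssf L h => .ssf L h
  | .star w => .ssf (wpow w '' Set.Iic m) ((Set.finite_Iic m).image _)

/-- `q(m)` for a CRPQ: replace every expression `w*` with `w^{≤m}`. -/
def SCRPQ.cut (m : ℕ) (q : SCRPQ α V) : SCRPQ α V :=
  ⟨q.k, q.src, fun i => (q.lang i).cut m, q.tgt⟩

/-- `q(m)` for a UCRPQ: replace every expression `w*` with `w^{≤m}`. -/
def qcut (Q : List (SCRPQ α V)) (m : ℕ) : List (SCRPQ α V) := Q.map (SCRPQ.cut m)

/-- `‖Q‖`: number of atoms of the UCRPQ `Q`. -/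
def natoms (Q : List (SCRPQ α V)) : ℕ := (Q.map SCRPQ.k).sum

/-- The set `W` of words `w` such that `w*` labels a recursive atom of `Q`. -/
def recWords (Q : List (SCRPQ α V)) : Set (List α) :=
  { w | ∃ q ∈ Q, ∃ i : Fin q.k, q.lang i = AtomLang.star w }

/-- `N`: the maximum length of a word in the language of a non-recursive atom of `Q`. -/
noncomputable def nrBound (Q : List (SCRPQ α V)) : ℕ :=
  sSup { n | ∃ q ∈ Q, ∃ i : Fin q.k, ∃ (L : Set (List α)) (h : L.Finite),
    q.lang i = AtomLang.ssf L h ∧ ∃ u ∈ L, u.length = n }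

/-- `Z := ‖Q‖³ · N · |vars(Q)| · Π_{w ∈ W} |w|`. -/
noncomputable def Zbound (Q : List (SCRPQ α V)) [Fintype V] : ℕ :=
  natoms Q ^ 3 * nrBound Q * Fintype.card V * ∏ᶠ w ∈ recWords Q, w.length

/-- `Z⁺ := ‖Q‖ · Z + 1`. -/
noncomputable def Zplus (Q : List (SCRPQ α V)) [Fintype V] : ℕ :=
  natoms Q * Zbound Q + 1

/-! ## Letter-boundedness -/

/-- Membership in the class UCRPQ(SSF, a*): atoms are SSF or `a*` for a letter `a`. -/
def AtomLang.inSSFaStar : AtomLang α → Prop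
  | .ssf _ _ => True
  | .star w => ∃ a, w = [a]

/-- Membership in the class UCRPQ(a, a*): every atom language is `{a}` or `{a}*`
for a letter `a`. -/
def AtomLang.in_a_aStar : AtomLang α → Prop
  | .ssf L _ => ∃ a : α, L = {[a]}
  | .star w => ∃ a, w = [a]

/-- An atom language which is an SSF expression or `a*` only for letters `a ∉ A`. -/
def AtomLang.okOutside (A : Set α) : AtomLang α → Prop
  | .ssf _ _ => True
  | .star w => ∃ a, a ∉ A ∧ w = [a]

open Classical in
/-- Replace `a*` with `a^{≤m} = {ε, a, …, a^m}` for every letter `a ∈ A`. -/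
noncomputable def AtomLang.restrict (A : Set α) (m : ℕ) : AtomLang α → AtomLang α
  | .ssf L h => .ssf L h
  | .star w => if ∃ a ∈ A, w = [a]
      then .ssf (wpow w '' Set.Iic m) ((Set.finite_Iic m).image _)
      else .star w

/-- `q(A, m)` (also `q[A ↦ m]`) for a CRPQ. -/
noncomputable def SCRPQ.restrict (A : Set α) (m : ℕ) (q : SCRPQ α V) : SCRPQ α V :=
  ⟨q.k, q.src, fun i => (q.lang i).restrict A m, q.tgt⟩

/-- `Q(A, m)` (also `Q[A ↦ m]`): the result of replacing in `Q` every atom language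
`a*` with `a ∈ A` by `a^{≤m}`. -/
noncomputable def qrestrict (Q : List (SCRPQ α V)) (A : Set α) (m : ℕ) :
    List (SCRPQ α V) := Q.map (SCRPQ.restrict A m)

/-- `Q` is `A`-bounded: `Q` is equivalent to some UCRPQ whose atom languages are SSF
expressions or expressions `a*` only for letters `a ∉ A`. -/
def BddIn (Q : List (SCRPQ α V)) [Finite V] (A : Set α) : Prop :=
  ∃ (n : ℕ) (Q' : List (SCRPQ α (Fin n))),
    (∀ d ∈ Q', ∀ i : Fin d.k, (d.lang i).okOutside A) ∧ QEquiv (SatS Q) (SatS Q')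

/-! ## Auxiliary machinery for the proof of Statement 17 -/

section Aux

variable {α : Type}

lemma wpow_single (a : α) (n : ℕ) : wpow [a] n = List.replicate n a := by
  induction n with
  | zero => rfl
  | succ n ih =>
    rw [wpow, List.replicate_succ, List.flatten_cons]
    rw [wpow] at ih
    rw [ih, List.replicate_succ]
    rfl

/-- Walks in a graph database, as functions from positions to vertices. -/
def HasWalkG (G : GDB α) (u : G.V) (l : List α) (v : G.V) : Prop :=
  ∃ f : ℕ → G.V, f 0 = u ∧ f l.length = v ∧
    ∀ (j : ℕ) (hj : j < l.length), (f j, l.get ⟨j, hj⟩, f (j + 1)) ∈ G.edges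

lemma hasWalkG_map {G₁ G₂ : GDB α} {h : G₁.V → G₂.V}
    (hh : ∀ x a y, (x, a, y) ∈ G₁.edges → (h x, a, h y) ∈ G₂.edges)
    {u v : G₁.V} {l : List α} (hw : HasWalkG G₁ u l v) :
    HasWalkG G₂ (h u) l (h v) := by
  obtain ⟨f, h0, hl, hs⟩ := hw
  exact ⟨fun j => h (f j), congrArg h h0, congrArg h hl, fun j hj => hh _ _ _ (hs j hj)⟩

lemma expansion_homToG_iff {V : Type} [Finite V] (q : CRPQ α V)
    (w : Fin q.k → List α) (G : GDB α) :
    (expansion q w).homToG G ↔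
      ∃ g : V → G.V, ∀ i, HasWalkG G (g (q.src i)) (w i) (g (q.tgt i)) := by
  constructor
  · rintro ⟨h, hh⟩
    refine ⟨fun v => h (Quot.mk _ (Sum.inl v)),
      fun i => ⟨fun j => h (Quot.mk _ (node q w i j)), ?_, ?_, fun j hj => ?_⟩⟩
    · simp [node]
    · by_cases h0 : (w i).length = 0
      · rw [h0]
        have hq : Quot.mk (eqRel q w) (Sum.inl (q.src i)) =
            Quot.mk (eqRel q w) (Sum.inl (q.tgt i)) :=
          Quot.sound ⟨i, List.length_eq_zero_iff.mp h0, rfl, rfl⟩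
        simp [node, hq]
      · simp [node, h0]
    · exact hh _ _ _ ⟨i, j, hj, rfl⟩
  · rintro ⟨g, hg⟩
    choose f hf0 hflen hfstep using hg
    let Φ : RawVar q w → G.V := Sum.elim g (fun p => f p.1 (p.2.1 + 1))
    have hresp : ∀ x y, eqRel q w x y → Φ x = Φ y := by
      rintro x y ⟨i, hwi, rfl, rfl⟩
      show g (q.src i) = g (q.tgt i)
      have h2 := hflen i
      rw [hwi] at h2
      simp only [List.length_nil] at h2
      rw [← hf0 i, ← h2]
    have hnode : ∀ (i : Fin q.k) (j : ℕ), j ≤ (w i).length → Φ (node q w i j) = f i j := by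
      intro i j hjle
      unfold node
      by_cases h0 : j = 0
      · show Φ (node q w i j) = f i j
        rw [show node q w i j = Sum.inl (q.src i) from if_pos h0]
        subst h0
        show g (q.src i) = f i 0
        exact (hf0 i).symm
      by_cases hlen : j = (w i).length
      · show Φ (node q w i j) = f i j
        rw [show node q w i j = Sum.inl (q.tgt i) from (if_neg h0).trans (if_pos hlen)]
        subst hlen
        show g (q.tgt i) = f i _
        exact (hflen i).symm
      by_cases hmid : j - 1 < (w i).length - 1
      · show Φ (node q w i j) = f i j
        rw [show node q w i j = Sum.inr ⟨i, ⟨j - 1, hmid⟩⟩ from (if_neg h0).trans ((if_neg hlen).trans (dif_pos hmid))]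
        show f i (j - 1 + 1) = f i j
        congr 1
        omega
      · exfalso; omega
    refine ⟨Quot.lift Φ hresp, ?_⟩
    intro x a y hmem
    obtain ⟨i, j, hj, heq⟩ := hmem
    replace heq := And.imp_right Prod.mk.inj (Prod.mk.inj heq)
    obtain ⟨rfl, rfl, rfl⟩ := heq
    have e1 : Quot.lift Φ hresp (Quot.mk _ (node q w i j)) = f i j := hnode i j (le_of_lt hj)
    have e2 : Quot.lift Φ hresp (Quot.mk _ (node q w i (j + 1))) = f i (j + 1) := hnode i (j + 1) hj
    rw [e1, e2]
    exact hfstep i j hj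

lemma satS_iff {V : Type} [Finite V] (Q : List (SCRPQ α V)) (G : GDB α) :
    SatS Q G ↔ ∃ q' ∈ Q, ∃ w : Fin q'.k → List α,
      (∀ i, w i ∈ (q'.lang i).language) ∧
      ∃ g : V → G.V, ∀ i, HasWalkG G (g (q'.src i)) (w i) (g (q'.tgt i)) := by
  unfold SatS Sat SatSet ExpU Exp toU
  constructor
  · rintro ⟨p, ⟨q1, hq1, w, hw, rfl⟩, hp⟩
    rw [List.mem_map] at hq1
    obtain ⟨q', hq', rfl⟩ := hq1
    exact ⟨q', hq', w, hw, (expansion_homToG_iff (SCRPQ.toCRPQ q') w G).mp hp⟩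
  · rintro ⟨q', hq', w, hw, hwalk⟩
    exact ⟨expansion (SCRPQ.toCRPQ q') w,
      ⟨SCRPQ.toCRPQ q', List.mem_map_of_mem hq', w, hw, rfl⟩,
      (expansion_homToG_iff (SCRPQ.toCRPQ q') w G).mpr hwalk⟩

lemma restrict_lang_sub (A : Set α) (m : ℕ) (L : AtomLang α) :
    (L.restrict A m).language ⊆ L.language := by
  cases L with
  | ssf L h => exact fun u hu => hu
  | star w =>
    intro u hu
    simp only [AtomLang.restrict] at hu
    split_ifs at hu with h
    · obtain ⟨nn, _, rfl⟩ := hu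
      exact ⟨nn, rfl⟩
    · exact hu

lemma exists_k_bound {V : Type} (Q : List (SCRPQ α V)) : ∃ K, ∀ q ∈ Q, q.k ≤ K := by
  induction Q with
  | nil => exact ⟨0, by simp⟩
  | cons q t ih =>
    obtain ⟨K, hK⟩ := ih
    refine ⟨max q.k K, fun q' hq' => ?_⟩
    rcases List.mem_cons.mp hq' with rfl | h
    · exact le_max_left _ _
    · exact le_trans (hK _ h) (le_max_right _ _)

lemma exists_ssf_bound {V : Type} (Q : List (SCRPQ α V)) :
    ∃ N, ∀ q ∈ Q, ∀ (i : Fin q.k) (L : Set (List α)) (h : L.Finite),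
      q.lang i = AtomLang.ssf L h → ∀ u ∈ L, u.length ≤ N := by
  induction Q with
  | nil => exact ⟨0, by simp⟩
  | cons q t ih =>
    obtain ⟨N1, hN1⟩ := ih
    have hq : ∀ i : Fin q.k, ∃ Ni, ∀ (L : Set (List α)) (h : L.Finite),
        q.lang i = AtomLang.ssf L h → ∀ u ∈ L, u.length ≤ Ni := by
      intro i
      cases hL : q.lang i with
      | ssf L h =>
        obtain ⟨N0, hN0⟩ := (h.image List.length).bddAbove
        refine ⟨N0, fun L' h' heq u hu => ?_⟩
        injection heq with h1
        subst h1
        exact hN0 (Set.mem_image_of_mem _ hu)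
      | star w =>
        refine ⟨0, fun L' h' heq => ?_⟩
        simp at heq
    choose gg hgg using hq
    refine ⟨max (Finset.univ.sup gg) N1, fun q' hq' i L h heq u hu => ?_⟩
    rcases List.mem_cons.mp hq' with rfl | ht
    · exact le_trans (le_trans (hgg i L h heq u hu) (Finset.le_sup (Finset.mem_univ i)))
        (le_max_left _ _)
    · exact le_trans (hN1 q' ht i L h heq u hu) (le_max_right _ _)

lemma shorten {β : Type} (R : β → β → Prop) (m : ℕ)
    (hp : ∀ f : Fin (m + 1) → β, (∀ j, ∃ y, R (f j) y) → ∃ j1 j2, j1 ≠ j2 ∧ f j1 = f j2) :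
    ∀ (n : ℕ) (f : ℕ → β), (∀ j < n, R (f j) (f (j + 1))) →
      ∃ n' ≤ m, ∃ f' : ℕ → β, f' 0 = f 0 ∧ f' n' = f n ∧ ∀ j < n', R (f' j) (f' (j + 1)) := by
  intro n
  induction n using Nat.strong_induction_on with
  | _ n ih =>
    intro f hf
    by_cases hnm : n ≤ m
    · exact ⟨n, hnm, f, rfl, rfl, hf⟩
    push_neg at hnm
    obtain ⟨j1, j2, hne, heq⟩ :=
      hp (fun j => f j.1) (fun j => ⟨f (j.1 + 1), hf j.1 (by have := j.isLt; omega)⟩)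
    have hvne : j1.1 ≠ j2.1 := fun h => hne (Fin.ext h)
    obtain ⟨p, qq, hpq, hqm, hpe⟩ : ∃ p qq : ℕ, p < qq ∧ qq ≤ m ∧ f p = f qq := by
      rcases lt_or_gt_of_ne hvne with h | h
      · exact ⟨j1.1, j2.1, h, by have := j2.isLt; omega, heq⟩
      · exact ⟨j2.1, j1.1, h, by have := j1.isLt; omega, heq.symm⟩
    set g : ℕ → β := fun j => if j ≤ p then f j else f (j + (qq - p)) with hgdef
    have hga : ∀ j, j ≤ p → g j = f j := fun j hj => if_pos hj
    have hgb : ∀ j, ¬ j ≤ p → g j = f (j + (qq - p)) := fun j hj => if_neg hj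
    have hstep : ∀ j < n - (qq - p), R (g j) (g (j + 1)) := by
      intro j hj
      by_cases h1 : j + 1 ≤ p
      · rw [hga j (by omega), hga (j + 1) h1]
        exact hf j (by omega)
      · by_cases h2 : j ≤ p
        · have hjp : j = p := by omega
          rw [hga j (by omega), hgb (j + 1) (by omega), hjp, hpe]
          have e : p + 1 + (qq - p) = qq + 1 := by omega
          rw [e]
          exact hf qq (by omega)
        · rw [hgb j h2, hgb (j + 1) (by omega)]
          have e : j + 1 + (qq - p) = (j + (qq - p)) + 1 := by omega
          rw [e]
          exact hf (j + (qq - p)) (by omega)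
    obtain ⟨n', hn', f', h0, hn'', hstep'⟩ := ih (n - (qq - p)) (by omega) g hstep
    refine ⟨n', hn', f', ?_, ?_, hstep'⟩
    · rw [h0, hga 0 (Nat.zero_le p)]
    · rw [hn'', hgb (n - (qq - p)) (by omega)]
      congr 1
      omega

/-- The canonical graph database of a CQ. -/
def canonGDB {α : Type} (C : CQ α) : GDB α := ⟨C.V, C.finV, C.atoms⟩

lemma mainStep {V : Type} [Finite V] (Q : List (SCRPQ α V)) (A : Set α)
    (hA : BddIn Q A) : ∃ m, QEquiv (SatS Q) (SatS (qrestrict Q A m)) := by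
  classical
  obtain ⟨nv, Q', hok, heq⟩ := hA
  obtain ⟨K, hK⟩ := exists_k_bound Q'
  obtain ⟨N, hN⟩ := exists_ssf_bound Q'
  refine ⟨K * (N + 1), fun G => ⟨?_, ?_⟩⟩
  · intro hG
    have hG' := (heq G).mp hG
    unfold SatS Sat SatSet ExpU Exp toU at hG'
    obtain ⟨p, ⟨q1, hq1, w', hw', rfl⟩, hp⟩ := hG'
    rw [List.mem_map] at hq1
    obtain ⟨q', hq', rfl⟩ := hq1
    obtain ⟨h', hh'⟩ := hp
    have hD : SatS Q' (canonGDB (expansion (SCRPQ.toCRPQ q') w')) := by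
      unfold SatS Sat SatSet ExpU Exp toU
      exact ⟨expansion (SCRPQ.toCRPQ q') w',
        ⟨SCRPQ.toCRPQ q', List.mem_map_of_mem hq', w', hw', rfl⟩,
        id, fun x a y hxy => hxy⟩
    have hQD := (heq (canonGDB (expansion (SCRPQ.toCRPQ q') w'))).mpr hD
    rw [satS_iff] at hQD
    obtain ⟨q₀, hq₀, w₀, hw₀, g, hwalk⟩ := hQD
    have hpigeon : ∀ a ∈ A,
        ∀ f : Fin (K * (N + 1) + 1) → (canonGDB (expansion (SCRPQ.toCRPQ q') w')).V,
        (∀ j, ∃ y, (f j, a, y) ∈ (canonGDB (expansion (SCRPQ.toCRPQ q') w')).edges) →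
        ∃ j1 j2, j1 ≠ j2 ∧ f j1 = f j2 := by
      intro a haA f hf
      have hcover : ∀ j : Fin (K * (N + 1) + 1), ∃ pr : Fin q'.k × Fin (N + 1),
          Quot.mk (eqRel (SCRPQ.toCRPQ q') w')
            (node (SCRPQ.toCRPQ q') w' pr.1 pr.2.1) = f j := by
        intro j
        obtain ⟨y, hy⟩ := hf j
        have hyE : (f j, a, y) ∈ (expansion (SCRPQ.toCRPQ q') w').atoms := hy
        obtain ⟨i, jj, hjj, heq2⟩ := hyE
        replace heq2 := And.imp_right Prod.mk.inj (Prod.mk.inj heq2)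
        obtain ⟨hx, ha, -⟩ := heq2
        have hjN : jj < N + 1 := by
          cases hLi : q'.lang i with
          | ssf L hfin =>
            have hmem : w' i ∈ (q'.lang i).language := hw' i
            rw [hLi] at hmem
            have := hN q' hq' i L hfin hLi (w' i) hmem
            omega
          | star wrd =>
            exfalso
            have hok' := hok q' hq' i
            rw [hLi] at hok'
            obtain ⟨b, hbA, rfl⟩ := hok'
            have hmem : w' i ∈ (q'.lang i).language := hw' i
            rw [hLi] at hmem
            obtain ⟨nn, hnn⟩ := hmem
            have hmem2 : a ∈ w' i := by
              rw [ha]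
              exact List.get_mem _ _
            rw [hnn, wpow_single] at hmem2
            exact hbA (List.eq_of_mem_replicate hmem2 ▸ haA)
        exact ⟨(i, ⟨jj, hjN⟩), hx.symm⟩
      choose c hc using hcover
      have hle : q'.k * (N + 1) ≤ K * (N + 1) := Nat.mul_le_mul_right _ (hK q' hq')
      have hcard : Fintype.card (Fin q'.k × Fin (N + 1)) <
          Fintype.card (Fin (K * (N + 1) + 1)) := by
        simpa using Nat.lt_succ_of_le hle
      obtain ⟨j1, j2, hne, hceq⟩ := Fintype.exists_ne_map_eq_of_card_lt c hcard
      exact ⟨j1, j2, hne, by rw [← hc j1, ← hc j2, hceq]⟩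
    have hshort : ∀ i : Fin q₀.k, ∃ l',
        l' ∈ ((q₀.lang i).restrict A (K * (N + 1))).language ∧
        HasWalkG (canonGDB (expansion (SCRPQ.toCRPQ q') w')) (g (q₀.src i)) l' (g (q₀.tgt i)) := by
      intro i
      cases hLi : q₀.lang i with
      | ssf L hfin =>
        refine ⟨w₀ i, ?_, hwalk i⟩
        have hmem : w₀ i ∈ (q₀.lang i).language := hw₀ i
        rw [hLi] at hmem
        exact hmem
      | star wrd =>
        by_cases htrig : ∃ a ∈ A, wrd = [a]
        · obtain ⟨a, haA, rfl⟩ := htrig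
          have hmem : w₀ i ∈ (q₀.lang i).language := hw₀ i
          rw [hLi] at hmem
          obtain ⟨nn, hnn⟩ := hmem
          have hwalkI := hwalk i
          rw [hnn, wpow_single] at hwalkI
          obtain ⟨f, hf0, hflen, hfstep⟩ := hwalkI
          simp only [List.length_replicate] at hflen
          have hfR : ∀ j < nn,
              (f j, a, f (j + 1)) ∈ (canonGDB (expansion (SCRPQ.toCRPQ q') w')).edges := by
            intro j hj
            have h2 := hfstep j (by simpa using hj)
            rwa [List.get_eq_getElem, List.getElem_replicate] at h2
          obtain ⟨n', hn', f', hf'0, hf'n, hf'step⟩ :=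
            shorten (fun x y => (x, a, y) ∈ (canonGDB (expansion (SCRPQ.toCRPQ q') w')).edges)
              (K * (N + 1)) (hpigeon a haA) nn f hfR
          refine ⟨wpow [a] n', ?_, ?_⟩
          · show wpow [a] n' ∈ ((AtomLang.star [a]).restrict A (K * (N + 1))).language
            simp only [AtomLang.restrict]
            rw [if_pos ⟨a, haA, rfl⟩]
            exact ⟨n', hn', rfl⟩
          · rw [wpow_single]
            refine ⟨f', by rw [hf'0, hf0], ?_, ?_⟩
            · simp only [List.length_replicate]
              rw [hf'n, hflen]
            · intro j hj
              simp only [List.length_replicate] at hj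
              rw [List.get_eq_getElem, List.getElem_replicate]
              exact hf'step j hj
        · refine ⟨w₀ i, ?_, hwalk i⟩
          have hmem : w₀ i ∈ (q₀.lang i).language := hw₀ i
          rw [hLi] at hmem
          simp only [AtomLang.restrict]
          rw [if_neg htrig]
          exact hmem
    choose l₁ hmem₁ hwalk₁ using hshort
    rw [satS_iff]
    refine ⟨SCRPQ.restrict A (K * (N + 1)) q₀, List.mem_map_of_mem hq₀, l₁, hmem₁,
      fun v => h' (g v), fun i => hasWalkG_map ?_ (hwalk₁ i)⟩
    exact hh'
  · intro hG
    rw [satS_iff] at hG ⊢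
    obtain ⟨q1, hq1, w, hw, g, hwalk⟩ := hG
    unfold qrestrict at hq1
    rw [List.mem_map] at hq1
    obtain ⟨q₀, hq₀, rfl⟩ := hq1
    exact ⟨q₀, hq₀, w, fun i => restrict_lang_sub A _ _ (hw i), g, hwalk⟩

/-- Renaming of variables in an SCRPQ. -/
def SCRPQ.rename {V W : Type} (e : V → W) (q : SCRPQ α V) : SCRPQ α W :=
  ⟨q.k, e ∘ q.src, q.lang, e ∘ q.tgt⟩

lemma satS_rename {V W : Type} [Finite V] [Finite W] (e : V ≃ W)
    (Q : List (SCRPQ α V)) (G : GDB α) :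
    SatS (Q.map (SCRPQ.rename e)) G ↔ SatS Q G := by
  rw [satS_iff, satS_iff]
  constructor
  · rintro ⟨q1, hq1, w, hw, g, hwalk⟩
    rw [List.mem_map] at hq1
    obtain ⟨q₀, hq₀, rfl⟩ := hq1
    exact ⟨q₀, hq₀, w, hw, fun v => g (e v), fun i => hwalk i⟩
  · rintro ⟨q₀, hq₀, w, hw, g, hwalk⟩
    refine ⟨SCRPQ.rename e q₀, List.mem_map_of_mem hq₀, w, hw,
      fun v => g (e.symm v), fun i => ?_⟩
    show HasWalkG G (g (e.symm (e (q₀.src i)))) (w i) (g (e.symm (e (q₀.tgt i))))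
    simpa using hwalk i

lemma bddIn_of_witness {V W : Type} [Finite V] [Fintype W] (Q : List (SCRPQ α V))
    (A : Set α) (Q' : List (SCRPQ α W))
    (hok : ∀ d ∈ Q', ∀ i : Fin d.k, (d.lang i).okOutside A)
    (h : QEquiv (SatS Q) (SatS Q')) : BddIn Q A := by
  refine ⟨Fintype.card W, Q'.map (SCRPQ.rename (Fintype.equivFin W)), ?_, ?_⟩
  · intro d hd i
    rw [List.mem_map] at hd
    obtain ⟨d₀, hd₀, rfl⟩ := hd
    exact hok d₀ hd₀ i
  · intro G
    rw [satS_rename]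
    exact h G

lemma bddIn_anti {V : Type} [Finite V] {Q : List (SCRPQ α V)} {A A' : Set α}
    (hsub : A' ⊆ A) (hA : BddIn Q A) : BddIn Q A' := by
  obtain ⟨n, Q', hok, heq⟩ := hA
  refine ⟨n, Q', fun d hd i => ?_, heq⟩
  have h := hok d hd i
  cases hL : d.lang i with
  | ssf L hf => exact trivial
  | star w =>
    rw [hL] at h
    obtain ⟨a, ha, rfl⟩ := h
    exact ⟨a, fun h' => ha (hsub h'), rfl⟩

lemma bddIn_congr {V : Type} [Finite V] {Q₁ Q₂ : List (SCRPQ α V)} {A : Set α}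
    (h : QEquiv (SatS Q₁) (SatS Q₂)) (hA : BddIn Q₂ A) : BddIn Q₁ A := by
  obtain ⟨n, Q', hok, heq⟩ := hA
  exact ⟨n, Q', hok, fun G => (h G).trans (heq G)⟩

lemma bddIn_empty {V : Type} [Fintype V] (Q : List (SCRPQ α V))
    (hcl : ∀ d ∈ Q, ∀ (i : Fin d.k) (w : List α), d.lang i = AtomLang.star w → ∃ a, w = [a]) :
    BddIn Q (∅ : Set α) := by
  refine bddIn_of_witness Q ∅ Q ?_ (fun G => Iff.rfl)
  intro d hd i
  cases hL : d.lang i with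
  | ssf L hf => exact trivial
  | star w =>
    obtain ⟨a, rfl⟩ := hcl d hd i w hL
    exact ⟨a, fun h => h, rfl⟩

lemma bddIn_union {V : Type} [Fintype V] (Q : List (SCRPQ α V))
    (hcl : ∀ d ∈ Q, ∀ (i : Fin d.k) (w : List α), d.lang i = AtomLang.star w → ∃ a, w = [a])
    {A B : Set α} (hA : BddIn Q A) (hB : BddIn Q B) : BddIn Q (A ∪ B) := by
  classical
  obtain ⟨m, h1⟩ := mainStep Q A hA
  have hB1 : BddIn (qrestrict Q A m) B := bddIn_congr (fun G => (h1 G).symm) hB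
  obtain ⟨m', h2⟩ := mainStep (qrestrict Q A m) B hB1
  refine bddIn_of_witness Q (A ∪ B) (qrestrict (qrestrict Q A m) B m') ?_
    (fun G => (h1 G).trans (h2 G))
  intro d hd i
  unfold qrestrict at hd
  rw [List.mem_map] at hd
  obtain ⟨d1, hd1, rfl⟩ := hd
  rw [List.mem_map] at hd1
  obtain ⟨d₀, hd₀, rfl⟩ := hd1
  show (((d₀.lang i).restrict A m).restrict B m').okOutside (A ∪ B)
  cases hL : d₀.lang i with
  | ssf L hf =>
    exact trivial
  | star w =>
    obtain ⟨a, rfl⟩ := hcl d₀ hd₀ i w hL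
    simp only [AtomLang.restrict]
    by_cases htrigA : ∃ a' ∈ A, [a] = [a']
    · rw [if_pos htrigA]
      exact trivial
    · rw [if_neg htrigA]
      simp only [AtomLang.restrict]
      by_cases htrigB : ∃ a' ∈ B, [a] = [a']
      · rw [if_pos htrigB]
        exact trivial
      · rw [if_neg htrigB]
        show ∃ b, b ∉ A ∪ B ∧ [a] = [b]
        refine ⟨a, ?_, rfl⟩
        intro hab
        rcases hab with h | h
        · exact htrigA ⟨a, h, rfl⟩
        · exact htrigB ⟨a, h, rfl⟩

end Aux


/-- the family `{A ⊆ Σ : q is A-bounded}` has a greatest element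
under inclusion, namely the union of all sets `B` such that `q` is `B`-bounded. -/
theorem statement17 {α V : Type} [Fintype α] [Fintype V] (q : List (SCRPQ α V))
    (hclass : ∀ d ∈ q, ∀ i : Fin d.k, (d.lang i).in_a_aStar) :
    BddIn q { a | ∃ B : Set α, BddIn q B ∧ a ∈ B } ∧
    (∀ B : Set α, BddIn q B → B ⊆ { a | ∃ B' : Set α, BddIn q B' ∧ a ∈ B' }) := by
  classical
  have hcl : ∀ d ∈ q, ∀ (i : Fin d.k) (w : List α), d.lang i = AtomLang.star w → ∃ a, w = [a] := by
    intro d hd i w hw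
    have h := hclass d hd i
    rw [hw] at h
    exact h
  constructor
  · have hBa : ∀ a : α, ∃ Ba : Set α,
        BddIn q Ba ∧ (a ∈ {a | ∃ B : Set α, BddIn q B ∧ a ∈ B} → a ∈ Ba) := by
      intro a
      by_cases h : ∃ B : Set α, BddIn q B ∧ a ∈ B
      · obtain ⟨B, hB, haB⟩ := h
        exact ⟨B, hB, fun _ => haB⟩
      · exact ⟨∅, bddIn_empty q hcl, fun h' => absurd h' h⟩
    choose Ba hBa1 hBa2 using hBa
    have hsup : ∀ s : Finset α, BddIn q (s.sup Ba) := by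
      intro s
      induction s using Finset.induction_on with
      | empty =>
        rw [Finset.sup_empty, Set.bot_eq_empty]
        exact bddIn_empty q hcl
      | @insert a s ha ih =>
        rw [Finset.sup_insert]
        exact bddIn_union q hcl (hBa1 a) ih
    refine bddIn_anti ?_ (hsup Finset.univ)
    intro a ha
    have hle : Ba a ⊆ Finset.univ.sup Ba := Finset.le_sup (Finset.mem_univ a)
    exact hle (hBa2 a ha)
  · exact fun B hB a ha => ⟨B, hB, ha⟩


end Paper
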